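/- Let R be a unital associative ring, let C ∈ R, and define δ : R → R by δ(F) := [F, C]. For every natural number M, all B₀, …, B_M ∈ R, the element A := Σ_{n=0}^{M} B_n·Cⁿ, and every F ∈ R, there exists G ∈ R such that [F, A·C] = Σ_{n=1}^{M+1} (−1)^{n−1}·B_{n−1}·δⁿ(F) + G·C. -/

import Mathlib

lemma key_lemma {R : Type*} [Ring R] (C F : R) :
    ∀ k : ℕ, ∃ G : R,
      F * C ^ (k + 1) - C ^ (k + 1) * F =
        ((-1 : ℤ) ^ k) • ((fun X => X * C - C * X)^[k + 1] F) + G * C := by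
  intro k
  induction k with
  | zero =>
    exact ⟨0, by simp⟩
  | succ k ih =>
    obtain ⟨G, hG⟩ := ih
    set D := (fun X => X * C - C * X)^[k + 1] F with hD
    refine ⟨2 • (F * C ^ (k + 1)) - C ^ (k + 1) * F - G * C - C * F * C ^ k + C * G, ?_⟩
    have hit : (fun X => X * C - C * X)^[k + 2] F = D * C - C * D := by
      rw [Function.iterate_succ_apply']
    rw [hit]
    have hDval : ((-1 : ℤ) ^ k) • D = F * C ^ (k + 1) - C ^ (k + 1) * F - G * C := by
      rw [hG]; abel
    have hsm : ((-1 : ℤ) ^ (k + 1)) • (D * C - C * D)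
        = -((((-1 : ℤ) ^ k) • D) * C - C * (((-1 : ℤ) ^ k) • D)) := by
      rw [smul_mul_assoc, mul_smul_comm, ← smul_sub, pow_succ]
      module
    rw [hsm, hDval]
    have hx : C * C ^ k = C ^ k * C := (Commute.refl C).pow_right k
    simp only [pow_succ]
    generalize C ^ k = X at hx ⊢
    have h1 : C * (X * (C * F)) = X * (C * (C * F)) := by
      rw [← mul_assoc, hx, mul_assoc]
    noncomm_ring
    rw [h1]

theorem stmt_8 {R : Type*} [Ring R] (C : R) (M : ℕ) (B : ℕ → R) (F : R) :
    ∃ G : R,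
      F * ((∑ n ∈ Finset.range (M + 1), B n * C ^ n) * C) -
        ((∑ n ∈ Finset.range (M + 1), B n * C ^ n) * C) * F =
      (∑ n ∈ Finset.Icc 1 (M + 1),
        ((-1 : ℤ) ^ (n - 1) • (B (n - 1) * (fun X => X * C - C * X)^[n] F))) + G * C := by
  classical
  set g : ℕ → R := fun k => (key_lemma C F k).choose with hgdef
  have hg : ∀ k, F * C ^ (k + 1) - C ^ (k + 1) * F =
      ((-1 : ℤ) ^ k) • ((fun X => X * C - C * X)^[k + 1] F) + g k * C :=
    fun k => (key_lemma C F k).choose_spec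
  refine ⟨∑ n ∈ Finset.range (M + 1), (B n * g n + (F * B n - B n * F) * C ^ n), ?_⟩
  rw [← Finset.Ico_add_one_right_eq_Icc, Finset.sum_Ico_eq_sum_range, Nat.add_sub_cancel]
  simp only [add_tsub_cancel_left, Nat.add_sub_cancel]
  rw [Finset.sum_mul, Finset.sum_mul, Finset.mul_sum, ← Finset.sum_sub_distrib,
    Finset.sum_mul, ← Finset.sum_add_distrib]
  refine Finset.sum_congr rfl fun n _ => ?_
  have h := hg n
  rw [Nat.add_comm 1 n]
  have expand : F * (B n * C ^ n * C) - B n * C ^ n * C * F =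
      B n * (F * C ^ (n + 1) - C ^ (n + 1) * F) + (F * B n - B n * F) * C ^ (n + 1) := by
    rw [pow_succ]; noncomm_ring
  rw [expand, h, mul_add, mul_smul_comm]
  rw [pow_succ]
  noncomm_ring
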